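/- Let p be a real number, let Δ = √(p² + 4), τ = (p + Δ)/2 and σ = (p − Δ)/2, and let A, B be real numbers. Define W : ℤ → ℝ by W(j) = A·τ^j + B·σ^j, and define the complex-valued function w : ℝ → ℂ by w(x) = A·(τ : ℂ)^(x : ℂ) + B·(σ : ℂ)^(x : ℂ), where z^s denotes the principal-branch complex power. Then for every integer j, the derivative of w at j exists and its real part equals ((W(j+1) + W(j−1))/Δ)·ln τ. -/

import Mathlib

/-- With `Δ = √(p²+4)`, `τ = (p+Δ)/2`, `σ = (p−Δ)/2`,
`W j = A·τ^j + B·σ^j` and `w x = A·τ^x + B·σ^x` (principal complex powers),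
the derivative of `w` at any integer `j` exists and its real part is
`((W(j+1) + W(j−1))/Δ)·ln τ`. -/
theorem statement0 (p A B Δ τ σ : ℝ)
    (hΔ : Δ = Real.sqrt (p ^ 2 + 4))
    (hτ : τ = (p + Δ) / 2) (hσ : σ = (p - Δ) / 2)
    (W : ℤ → ℝ) (hW : ∀ j : ℤ, W j = A * τ ^ j + B * σ ^ j)
    (w : ℝ → ℂ)
    (hw : ∀ x : ℝ, w x = (A : ℂ) * (τ : ℂ) ^ (x : ℂ) + (B : ℂ) * (σ : ℂ) ^ (x : ℂ))
    (j : ℤ) :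
    ∃ d : ℂ, HasDerivAt w d (j : ℝ) ∧
      d.re = ((W (j + 1) + W (j - 1)) / Δ) * Real.log τ := by
  have hΔ0 : 0 ≤ Δ := hΔ ▸ Real.sqrt_nonneg _
  have hΔsq : Δ ^ 2 = p ^ 2 + 4 := by rw [hΔ]; exact Real.sq_sqrt (by positivity)
  have hτpos : 0 < τ := by rw [hτ]; nlinarith
  have hσneg : σ < 0 := by rw [hσ]; nlinarith
  have hτσ : τ * σ = -1 := by rw [hτ, hσ]; nlinarith
  have hΔpos : 0 < Δ := by nlinarith
  have hτne : (τ : ℂ) ≠ 0 := by exact_mod_cast hτpos.ne'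
  have hσne : (σ : ℂ) ≠ 0 := by exact_mod_cast hσneg.ne
  have h1 : HasDerivAt (fun x : ℝ => (τ : ℂ) ^ (x : ℂ))
      ((τ : ℂ) ^ (((j : ℝ)) : ℂ) * Complex.log τ) (j : ℝ) :=
    ((Complex.hasStrictDerivAt_const_cpow (Or.inl hτne)).hasDerivAt).comp_ofReal
  have h2 : HasDerivAt (fun x : ℝ => (σ : ℂ) ^ (x : ℂ))
      ((σ : ℂ) ^ (((j : ℝ)) : ℂ) * Complex.log σ) (j : ℝ) :=
    ((Complex.hasStrictDerivAt_const_cpow (Or.inl hσne)).hasDerivAt).comp_ofReal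
  refine ⟨(A : ℂ) * ((τ : ℂ) ^ (((j : ℝ)) : ℂ) * Complex.log τ)
      + (B : ℂ) * ((σ : ℂ) ^ (((j : ℝ)) : ℂ) * Complex.log σ), ?_, ?_⟩
  · have : HasDerivAt (fun x : ℝ => (A : ℂ) * (τ : ℂ) ^ (x : ℂ) + (B : ℂ) * (σ : ℂ) ^ (x : ℂ))
        _ (j : ℝ) := (h1.const_mul (A : ℂ)).add (h2.const_mul (B : ℂ))
    exact (funext hw : w = _) ▸ this
  · have hcast : (((j : ℝ)) : ℂ) = (j : ℂ) := by push_cast; ring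
    have hcpτ : (τ : ℂ) ^ (((j : ℝ)) : ℂ) = ((τ ^ j : ℝ) : ℂ) := by
      rw [hcast, Complex.cpow_intCast, Complex.ofReal_zpow]
    have hcpσ : (σ : ℂ) ^ (((j : ℝ)) : ℂ) = ((σ ^ j : ℝ) : ℂ) := by
      rw [hcast, Complex.cpow_intCast, Complex.ofReal_zpow]
    have hlogτ : Complex.log (τ : ℂ) = ((Real.log τ : ℝ) : ℂ) :=
      (Complex.ofReal_log hτpos.le).symm
    have hlogσre : (Complex.log (σ : ℂ)).re = Real.log (-σ) := by
      rw [Complex.log_re, Complex.norm_real, Real.norm_eq_abs, abs_of_neg hσneg]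
    have hinv : -σ = τ⁻¹ := by field_simp; linarith
    have hre : ((A : ℂ) * ((τ : ℂ) ^ (((j : ℝ)) : ℂ) * Complex.log τ)
        + (B : ℂ) * ((σ : ℂ) ^ (((j : ℝ)) : ℂ) * Complex.log σ)).re
        = A * (τ ^ j * Real.log τ) + B * (σ ^ j * (Complex.log (σ : ℂ)).re) := by
      rw [hcpτ, hcpσ, hlogτ]
      simp only [Complex.add_re, Complex.re_ofReal_mul,
        ← Complex.ofReal_mul, Complex.ofReal_re]
    rw [hre, hlogσre, hinv, Real.log_inv]
    have hτinv : τ⁻¹ = -σ := hinv.symm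
    have hσne' : σ ≠ 0 := hσneg.ne
    have hσinv : σ⁻¹ = -τ := by field_simp; nlinarith [hτσ]
    have hWs : W (j + 1) + W (j - 1) = Δ * (A * τ ^ j - B * σ ^ j) := by
      rw [hW, hW, zpow_add₀ (by exact_mod_cast hτpos.ne' : τ ≠ 0),
        zpow_sub₀ (by exact_mod_cast hτpos.ne' : τ ≠ 0),
        zpow_add₀ hσneg.ne, zpow_sub₀ hσneg.ne, zpow_one, zpow_one]
      rw [div_eq_mul_inv, div_eq_mul_inv, hτinv, hσinv]
      have hΔeq : Δ = τ - σ := by rw [hτ, hσ]; ring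
      rw [hΔeq]; ring
    rw [hWs, mul_div_cancel_left₀ _ hΔpos.ne']
    ring
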